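/- The Generalized APG (GAPG) mechanism is strategy-proof: for every buyer i, true type, misreport (v_i', R_i') with R_i' ⊆ R_i, and others' declarations, truthful reporting maximizes i's utility. Key inequalities: a truthful loser (v_{i,sum} ≤ v*_sum(N, n_k)) who lies to become a winner gets v_{i,sum} − v*_sum(P_i^close, n_k) ≤ v*_sum(N, n_k) − v*_sum(P_i^close, n_k); a truthful winner (v_{i,sum} ≥ v*_sum(N, n_k)) who lies to become a loser gets v*_sum(N, n_k) − v*_sum(P_i^close, n_k) ≤ v_{i,sum} − v*_sum(P_i^close, n_k); and withholding information can only decrease v*_sum(N, n_k) while leaving v*_sum(P_i^close, n_k) unchanged. -/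

import Mathlib

open scoped Classical

/-- `kthLargest S f m` is the `m`-th largest (1-indexed) value of `f` on the finite set `S`,
with the convention that it is `0` if `S` has fewer than `m` elements. -/
noncomputable def kthLargest {α : Type*} (S : Finset α) (f : α → ℝ) (m : ℕ) : ℝ :=
  if 1 ≤ m ∧ m ≤ S.card then ((S.val.map f).sort (· ≤ ·)).getD (S.card - m) 0 else 0

/-- The `n_k`-sum valuation of a buyer: the sum of her first `n_k = ⌊√k⌋` marginal values. -/
noncomputable def nkSum (k : ℕ) {n : ℕ} (v : Fin n → ℕ → ℝ) (i : Fin n) : ℝ :=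
  ∑ l ∈ Finset.range (Nat.sqrt k), v i l

/-- The rank of buyer `i` among the informed buyers `A` by declared `n_k`-sum valuation,
ties broken in favor of smaller indices. -/
noncomputable def rank {n : ℕ} (A : Finset (Fin n)) (f : Fin n → ℝ) (i : Fin n) : ℕ :=
  (A.filter (fun j => f i < f j ∨ (f j = f i ∧ j < i))).card

/-- GAPG winners: the (up to `n_k`) informed buyers with the highest declared `n_k`-sum
valuations, ties broken by index. -/
noncomputable def Wins (k : ℕ) {n : ℕ} (A : Finset (Fin n)) (v : Fin n → ℕ → ℝ) (i : Fin n) : Prop :=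
  i ∈ A ∧ rank A (nkSum k v) i < Nat.sqrt k

/-- GAPG utility of buyer `i` with true marginal values `vtrue`, when `A` is the set of
informed buyers and `v'` the declared valuations: a winner gets `n_k` items and pays
`v*_sum(P_i^close, n_k)`; a loser receives the rebate
`v*_sum(N, n_k) − v*_sum(P_i^close, n_k)`. -/
noncomputable def gapgUtil (k : ℕ) {n : ℕ} (A : Finset (Fin n)) (v' : Fin n → ℕ → ℝ)
    (i : Fin n) (vtrue : ℕ → ℝ) : ℝ :=
  if Wins k A v' i then
    (∑ l ∈ Finset.range (Nat.sqrt k), vtrue l)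
      - kthLargest (A.filter (· < i)) (nkSum k v') (Nat.sqrt k)
  else
    kthLargest A (nkSum k v') (Nat.sqrt k)
      - kthLargest (A.filter (· < i)) (nkSum k v') (Nat.sqrt k)

private lemma sorted_le_of_mem_drop {L : List ℝ} (hL : L.Pairwise (· ≤ ·)) {j : ℕ}
    (hj : j < L.length) {x : ℝ} (hx : x ∈ L.drop j) : L[j] ≤ x := by
  obtain ⟨t, ht, rfl⟩ := List.mem_iff_getElem.mp hx
  rw [List.getElem_drop]
  have hjt : j + t < L.length := by
    have := ht; rw [List.length_drop] at this; omega
  have := hL.rel_get_of_le (a := ⟨j, hj⟩) (b := ⟨j + t, hjt⟩) (by simp)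
  simpa using this

private lemma sorted_mem_take_le {L : List ℝ} (hL : L.Pairwise (· ≤ ·)) {j : ℕ}
    (hj : j < L.length) {x : ℝ} (hx : x ∈ L.take (j+1)) : x ≤ L[j] := by
  obtain ⟨t, ht, rfl⟩ := List.mem_iff_getElem.mp hx
  have ht' : t ≤ j := by
    have := ht; rw [List.length_take] at this; omega
  rw [List.getElem_take]
  have htL : t < L.length := by omega
  have := hL.rel_get_of_le (a := ⟨t, htL⟩) (b := ⟨j, hj⟩) (by simpa using ht')
  simpa using this

private lemma countP_drop_ge {L : List ℝ} (hL : L.Pairwise (· ≤ ·)) {j : ℕ}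
    (hj : j < L.length) {p : ℝ → Bool} (hp : ∀ x, L[j] ≤ x → p x) :
    L.length - j ≤ L.countP p := by
  conv_rhs => rw [← List.take_append_drop j L]
  rw [List.countP_append]
  have h1 : (L.drop j).countP p = (L.drop j).length :=
    List.countP_eq_length.mpr (fun a ha => hp a (sorted_le_of_mem_drop hL hj ha))
  rw [h1, List.length_drop]
  omega

private lemma countP_take_le {L : List ℝ} (hL : L.Pairwise (· ≤ ·)) {j : ℕ}
    (hj : j < L.length) {p : ℝ → Bool} (hp : ∀ x, x ≤ L[j] → p x = false) :
    L.countP p ≤ L.length - (j+1) := by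
  conv_lhs => rw [← List.take_append_drop (j+1) L]
  rw [List.countP_append]
  have h0 : (L.take (j+1)).countP p = 0 :=
    List.countP_eq_zero.mpr (fun a ha => by
      simpa using hp a (sorted_mem_take_le hL hj ha))
  have h1 : (L.drop (j+1)).countP p ≤ (L.drop (j+1)).length := List.countP_le_length
  rw [h0, List.length_drop] at *
  omega

private lemma countP_sort_eq {α : Type*} (S : Finset α) (f : α → ℝ) (p : ℝ → Prop)
    [DecidablePred p] :
    ((S.val.map f).sort (· ≤ ·)).countP (fun x => decide (p x))
      = (S.filter (fun a => p (f a))).card := by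
  rw [← Multiset.coe_countP, Multiset.sort_eq, Multiset.countP_map]
  simp [Finset.card, Finset.filter_val]

section kth
variable {α : Type*} {S : Finset α} {f : α → ℝ} {m : ℕ} {c : ℝ}

private lemma sort_len : ((S.val.map f).sort (· ≤ ·)).length = S.card := by
  rw [Multiset.length_sort, Multiset.card_map]; rfl

private lemma kthLargest_eq_getElem (h1 : 1 ≤ m) (h2 : m ≤ S.card)
    (hidx : S.card - m < ((S.val.map f).sort (· ≤ ·)).length) :
    kthLargest S f m = ((S.val.map f).sort (· ≤ ·))[S.card - m] := by
  rw [kthLargest, if_pos ⟨h1, h2⟩, List.getD_eq_getElem _ _ hidx]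

private lemma le_kthLargest_of_count (h1 : 1 ≤ m)
    (hc : m ≤ (S.filter (fun a => c ≤ f a)).card) : c ≤ kthLargest S f m := by
  have h2 : m ≤ S.card := le_trans hc (Finset.card_filter_le _ _)
  set L := (S.val.map f).sort (· ≤ ·) with hL
  have hlen : L.length = S.card := sort_len
  have hidx : S.card - m < L.length := by omega
  rw [kthLargest_eq_getElem h1 h2 hidx]
  by_contra hlt
  push_neg at hlt
  have hcount : L.countP (fun x => decide (c ≤ x)) ≤ L.length - (S.card - m + 1) :=
    countP_take_le (Multiset.pairwise_sort _ _) hidx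
      (fun x hx => by simp only [decide_eq_false_iff_not, not_le]; exact lt_of_le_of_lt hx hlt)
  rw [countP_sort_eq S f (fun x => c ≤ x)] at hcount
  omega

private lemma kthLargest_le_of_count (h1 : 1 ≤ m) (h2 : m ≤ S.card)
    (hc : (S.filter (fun a => c < f a)).card < m) : kthLargest S f m ≤ c := by
  set L := (S.val.map f).sort (· ≤ ·) with hL
  have hlen : L.length = S.card := sort_len
  have hidx : S.card - m < L.length := by omega
  rw [kthLargest_eq_getElem h1 h2 hidx]
  by_contra hlt
  push_neg at hlt
  have hcount : L.length - (S.card - m) ≤ L.countP (fun x => decide (c < x)) :=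
    countP_drop_ge (Multiset.pairwise_sort _ _) hidx
      (fun x hx => by simpa using lt_of_lt_of_le hlt hx)
  rw [countP_sort_eq S f (fun x => c < x)] at hcount
  omega

private lemma count_kthLargest (h1 : 1 ≤ m) (h2 : m ≤ S.card) :
    m ≤ (S.filter (fun a => kthLargest S f m ≤ f a)).card := by
  have hlen : ((S.val.map f).sort (· ≤ ·)).length = S.card := sort_len
  have hidx : S.card - m < ((S.val.map f).sort (· ≤ ·)).length := by omega
  rw [kthLargest_eq_getElem h1 h2 hidx]
  have hcount :=
    countP_drop_ge (L := (S.val.map f).sort (· ≤ ·)) (Multiset.pairwise_sort _ _) hidx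
      (p := fun x => decide (((S.val.map f).sort (· ≤ ·))[S.card - m] ≤ x))
      (fun x hx => by simpa using hx)
  rw [countP_sort_eq S f (fun x => ((S.val.map f).sort (· ≤ ·))[S.card - m] ≤ x)] at hcount
  omega

private lemma kthLargest_nonneg (hf : ∀ a ∈ S, 0 ≤ f a) : 0 ≤ kthLargest S f m := by
  rw [kthLargest]
  split
  · next h =>
    have hidx : S.card - m < ((S.val.map f).sort (· ≤ ·)).length := by
      have : ((S.val.map f).sort (· ≤ ·)).length = S.card := sort_len
      omega
    rw [List.getD_eq_getElem _ _ hidx]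
    have hmem : ((S.val.map f).sort (· ≤ ·))[S.card - m] ∈ (S.val.map f).sort (· ≤ ·) :=
      List.getElem_mem _
    have : ((S.val.map f).sort (· ≤ ·))[S.card - m] ∈ S.val.map f := by
      rwa [← Multiset.mem_coe, Multiset.sort_eq] at hmem
    obtain ⟨a, ha, heq⟩ := Multiset.mem_map.mp this
    exact heq ▸ hf a ha
  · exact le_refl 0

private lemma kthLargest_congr {β : Type*} {T : Finset β} {g : β → ℝ}
    (h : S.val.map f = T.val.map g) : kthLargest S f m = kthLargest T g m := by
  have hcard : S.card = T.card := by
    have h1 := congrArg Multiset.card h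
    rw [Multiset.card_map, Multiset.card_map] at h1
    exact h1
  rw [kthLargest, kthLargest, h, hcard]

end kth

/-- **Strategy-proofness of the generalized APG (GAPG) mechanism.**  For every buyer `i`
with decreasing nonnegative marginal values, misreporting her valuations (`v'`) and/or
withholding information (which removes a set `D` of buyers farther than `i` on the aligned
path graph from the auction) never yields more utility than truthful reporting. -/
theorem gapg_strategyproof (n k : ℕ) (hk : 0 < k)
    (A : Finset (Fin n)) (v : Fin n → ℕ → ℝ)
    (hv : ∀ j, (∀ l, 0 ≤ v j l) ∧ ∀ l, l + 1 < k → v j (l + 1) ≤ v j l)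
    (i : Fin n) (hi : i ∈ A)
    (v' : ℕ → ℝ) (hv' : (∀ l, 0 ≤ v' l) ∧ ∀ l, l + 1 < k → v' (l + 1) ≤ v' l)
    (D : Finset (Fin n)) (hD : ∀ j ∈ D, i < j) :
    gapgUtil k (A \ D) (Function.update v i v') i (v i) ≤ gapgUtil k A v i (v i) := by
  classical
  have hm1 : 1 ≤ Nat.sqrt k := Nat.sqrt_pos.mpr hk
  set m := Nat.sqrt k with hmdef
  set v'' := Function.update v i v' with hv''def
  set B := A \ D with hBdef
  have hiB : i ∈ B := Finset.mem_sdiff.mpr ⟨hi, fun h => lt_irrefl i (hD i h)⟩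
  have hBA : B ⊆ A := Finset.sdiff_subset
  have hfoff : ∀ j : Fin n, j ≠ i → nkSum k v'' j = nkSum k v j := by
    intro j hj
    unfold nkSum
    exact Finset.sum_congr rfl (fun l _ => by rw [hv''def, Function.update_of_ne hj])
  have hf0 : ∀ j ∈ A, 0 ≤ nkSum k v j :=
    fun j _ => Finset.sum_nonneg (fun l _ => (hv j).1 l)
  have hfi0 : 0 ≤ nkSum k v i := hf0 i hi
  -- payment equality
  have hPset : B.filter (· < i) = A.filter (· < i) := by
    ext j
    simp only [Finset.mem_filter, hBdef, Finset.mem_sdiff]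
    constructor
    · rintro ⟨⟨hjA, _⟩, hji⟩; exact ⟨hjA, hji⟩
    · rintro ⟨hjA, hji⟩
      exact ⟨⟨hjA, fun hd => absurd hji (asymm (hD j hd))⟩, hji⟩
  have hpay : kthLargest (B.filter (· < i)) (nkSum k v'') m
      = kthLargest (A.filter (· < i)) (nkSum k v) m := by
    apply kthLargest_congr
    rw [hPset]
    apply Multiset.map_congr rfl
    intro j hj
    have hji : j < i := (Finset.mem_filter.mp (Finset.mem_def.mpr hj)).2
    exact hfoff j (ne_of_lt hji)
  -- truthful loser bound
  have hlosebound : m ≤ rank A (nkSum k v) i → nkSum k v i ≤ kthLargest A (nkSum k v) m := by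
    intro hr
    apply le_kthLargest_of_count hm1
    refine le_trans hr (Finset.card_le_card ?_)
    intro j hj
    rw [Finset.mem_filter] at hj ⊢
    obtain ⟨hjA, h⟩ := hj
    refine ⟨hjA, ?_⟩
    rcases h with h | ⟨h, _⟩
    · exact le_of_lt h
    · exact le_of_eq h.symm
  -- truthful winner bound
  have hwinbound : rank A (nkSum k v) i < m → m ≤ A.card →
      kthLargest A (nkSum k v) m ≤ nkSum k v i := by
    intro hr h2
    apply kthLargest_le_of_count hm1 h2
    refine lt_of_le_of_lt (Finset.card_le_card ?_) hr
    intro j hj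
    rw [Finset.mem_filter] at hj ⊢
    exact ⟨hj.1, Or.inl hj.2⟩
  -- crux: deviation loses
  have hcrux : m ≤ rank B (nkSum k v'') i →
      kthLargest B (nkSum k v'') m ≤ kthLargest A (nkSum k v) m := by
    intro hr
    by_cases hc : m ≤ B.card
    · have hcnt := count_kthLargest (S := B) (f := nkSum k v'') hm1 hc
      set c := kthLargest B (nkSum k v'') m with hcdef
      apply le_kthLargest_of_count hm1
      by_cases hci : c ≤ nkSum k v'' i
      · refine le_trans hr (Finset.card_le_card ?_)
        intro j hj
        rw [Finset.mem_filter] at hj ⊢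
        obtain ⟨hjB, hcond⟩ := hj
        have hjne : j ≠ i := by
          rintro rfl
          rcases hcond with h | ⟨_, h⟩ <;> exact absurd h (by simp)
        refine ⟨hBA hjB, ?_⟩
        rw [← hfoff j hjne]
        rcases hcond with h | ⟨h, _⟩
        · exact le_trans hci (le_of_lt h)
        · exact le_trans hci (le_of_eq h.symm)
      · refine le_trans hcnt (Finset.card_le_card ?_)
        intro j hj
        rw [Finset.mem_filter] at hj ⊢
        obtain ⟨hjB, hcond⟩ := hj
        have hjne : j ≠ i := by rintro rfl; exact hci hcond
        exact ⟨hBA hjB, (hfoff j hjne) ▸ hcond⟩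
    · have hz : kthLargest B (nkSum k v'') m = 0 := by
        rw [kthLargest, if_neg (fun h => hc h.2)]
      rw [hz]
      exact kthLargest_nonneg hf0
  have hsum : (∑ l ∈ Finset.range m, v i l) = nkSum k v i := rfl
  simp only [gapgUtil, ← hmdef, ← hv''def, ← hBdef, hpay, hsum]
  by_cases hW' : Wins k B v'' i
  · rw [if_pos hW']
    by_cases hW : Wins k A v i
    · rw [if_pos hW]
    · rw [if_neg hW]
      have hr : m ≤ rank A (nkSum k v) i :=
        le_of_not_gt (fun h => hW ⟨hi, h⟩)
      exact sub_le_sub_right (hlosebound hr) _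
  · rw [if_neg hW']
    have hr : m ≤ rank B (nkSum k v'') i :=
      le_of_not_gt (fun h => hW' ⟨hiB, h⟩)
    have hT' := hcrux hr
    by_cases hW : Wins k A v i
    · rw [if_pos hW]
      apply sub_le_sub_right
      by_cases hcard : m ≤ A.card
      · exact le_trans hT' (hwinbound hW.2 hcard)
      · have hz : kthLargest B (nkSum k v'') m = 0 := by
          rw [kthLargest, if_neg]
          rintro ⟨-, h2⟩
          exact hcard (le_trans h2 (Finset.card_le_card hBA))
        rw [hz]
        exact hfi0
    · rw [if_neg hW]
      exact sub_le_sub_right hT' _
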